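/- Let R be a Noetherian ring, I = (f_1,…,f_r), a = (a_1,…,a_s) ⊆ I with (a_1 … a_s) = (f_1 … f_r)·C for an r×s matrix C over R. Let S = R[t_1,…,t_r], γ_j = Σ_i c_{ij} t_i, and let L ⊆ S be the defining ideal of the symmetric algebra Sym(I) with respect to f_1,…,f_r. If I = a, then (γ_1,…,γ_s) + L = (t_1,…,t_r) as ideals of S. -/

import Mathlib

noncomputable section

open MvPolynomial

/-- The defining ideal `L` of the symmetric algebra of `I = (f 0, …, f (r-1))` inside
`S = R[t_1,…,t_r]`: the ideal generated by the linear forms coming from the syzygies of `f`. -/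
noncomputable def symDefIdeal {R : Type*} [CommRing R] {r : ℕ} (f : Fin r → R) :
    Ideal (MvPolynomial (Fin r) R) :=
  Ideal.span {q | ∃ b : Fin r → R, (∑ i, b i * f i = 0) ∧
    q = ∑ i, MvPolynomial.C (b i) * MvPolynomial.X i}

/-- The linear form `γ_j = ∑ i, c_{ij} t_i` associated to a matrix `C = (c_{ij})`. -/
noncomputable def gammaForm {R : Type*} [CommRing R] {r s : ℕ}
    (C : Matrix (Fin r) (Fin s) R) (j : Fin s) : MvPolynomial (Fin r) R :=
  ∑ i, MvPolynomial.C (C i j) * MvPolynomial.X i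

/-- if `I = 𝔞`, then `(γ_1,…,γ_s) + L = (t_1,…,t_r)` in `S = R[t_1,…,t_r]`,
where `L` is the defining ideal of the symmetric algebra of `I` and `γ_j = ∑ i, c_{ij} t_i`
with `a_j = ∑ i, c_{ij} f_i`. -/
theorem gamma_sup_symDefIdeal_eq {R : Type*} [CommRing R] [IsNoetherianRing R] {r s : ℕ}
    (f : Fin r → R) (a : Fin s → R) (C : Matrix (Fin r) (Fin s) R)
    (hC : ∀ j, a j = ∑ i, C i j * f i)
    (hIa : Ideal.span (Set.range a) = Ideal.span (Set.range f)) :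
    Ideal.span (Set.range (gammaForm C)) ⊔ symDefIdeal f =
      Ideal.span (Set.range (MvPolynomial.X : Fin r → MvPolynomial (Fin r) R)) := by
  apply le_antisymm
  · apply sup_le
    · rw [Ideal.span_le]
      rintro _ ⟨j, rfl⟩
      exact Ideal.sum_mem _ fun i _ =>
        Ideal.mul_mem_left _ _ (Ideal.subset_span ⟨i, rfl⟩)
    · rw [symDefIdeal, Ideal.span_le]
      rintro _ ⟨b, -, rfl⟩
      exact Ideal.sum_mem _ fun i _ =>
        Ideal.mul_mem_left _ _ (Ideal.subset_span ⟨i, rfl⟩)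
  · rw [Ideal.span_le]
    rintro _ ⟨i, rfl⟩
    have hfi : f i ∈ Ideal.span (Set.range a) := by
      rw [hIa]; exact Ideal.subset_span ⟨i, rfl⟩
    rw [Ideal.span, Submodule.mem_span_range_iff_exists_fun] at hfi
    obtain ⟨d, hd⟩ := hfi
    simp only [smul_eq_mul] at hd
    set g : MvPolynomial (Fin r) R := ∑ j, MvPolynomial.C (d j) * gammaForm C j with hg
    have hgmem : g ∈ Ideal.span (Set.range (gammaForm C)) :=
      Ideal.sum_mem _ fun j _ => Ideal.mul_mem_left _ _ (Ideal.subset_span ⟨j, rfl⟩)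
    set b : Fin r → R := fun k => (if k = i then (1:R) else 0) - ∑ j, d j * C k j with hb
    have hqmem : MvPolynomial.X i - g ∈ symDefIdeal f := by
      apply Ideal.subset_span
      refine ⟨b, ?_, ?_⟩
      · have : ∑ k, b k * f k
            = (∑ k, (if k = i then (1:R) else 0) * f k) - ∑ k, (∑ j, d j * C k j) * f k := by
          rw [← Finset.sum_sub_distrib]
          exact Finset.sum_congr rfl fun k _ => by rw [hb]; ring
        rw [this]
        simp only [ite_mul, one_mul, zero_mul, Finset.sum_ite_eq' Finset.univ i f,
          Finset.mem_univ, if_true]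
        have key : ∑ k, (∑ j, d j * C k j) * f k = ∑ j, d j * a j := by
          simp_rw [Finset.sum_mul, hC, Finset.mul_sum]
          rw [Finset.sum_comm]
          exact Finset.sum_congr rfl fun k _ => Finset.sum_congr rfl fun j _ => by ring
        rw [key, hd, sub_self]
      · rw [hg]; unfold gammaForm
        simp only [hb, map_sub, map_sum, map_mul, sub_mul, Finset.sum_sub_distrib,
          Finset.sum_mul, Finset.mul_sum, apply_ite MvPolynomial.C, map_one, map_zero,
          ite_mul, one_mul, zero_mul, Finset.sum_ite_eq' Finset.univ i, Finset.mem_univ,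
          if_true]
        rw [Finset.sum_comm]
        refine congrArg (MvPolynomial.X i - ·) ?_
        exact Finset.sum_congr rfl fun k _ => Finset.sum_congr rfl fun j _ => by ring
    have := Ideal.add_mem _ (Ideal.mem_sup_left hgmem) (Ideal.mem_sup_right hqmem)
    rw [add_sub_cancel] at this
    exact this

end
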